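/- Let N = 1 + p + q + r and write points of ℂ^N as (z, u, v, w) ∈ ℂ × ℂ^p × ℂ^q × ℂ^r, so that ℍ^N = {(z,u,v,w) : Im z > |u|² + |v|² + |w|²}. Let λ > 1 be real, let a ∈ ℂ^r, b ∈ ℂ, let D be a q×q diagonal matrix whose diagonal entries have modulus 1 and are different from 1, and let A ∈ ℂ^{r×r} be non-singular with ‖A‖ ≤ 1, and suppose ψ(z,u,v,w) = (λz + 2i⟨w, a⟩ + b, √λ·u, √λ·Dv, √λ·Aw) is a self-map of ℍ^N. Suppose there exists M ∈ ℂ^{r×r} with exp(M) = A, and for t ≥ 0 set λ_t = λ^t, A_t = exp(tM), a_t = (λI − √λ·Aᴴ)^{−1}(λ_t I − √(λ_t)·A_tᴴ) a, b_t = ((1 − λ_t)/(1 − λ))·b, and Q_t = I − A_tᴴ A_t. If for every t ≥ 0: (1) Q_t is Hermitian positive semi-definite, and (2) there exists x_t ∈ ℂ^r with Q_t x_t = a_t and Im(b_t) ≥ (1/λ_t)·x_tᴴ a_t, then ψ can be embedded into a semigroup of holomorphic self-maps of ℍ^N. -/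

import Mathlib

open Matrix Set Complex Filter
open scoped ComplexOrder

noncomputable section

/-- The Hermitian inner product `⟨x, y⟩ = ∑ j, x j * conj (y j)` on `ℂ^n`. -/
def herm {n : Type*} [Fintype n] (x y : n → ℂ) : ℂ :=
  ∑ j, x j * (starRingEnd ℂ) (y j)

/-- The squared Euclidean norm on `ℂ^n`. -/
def enormSq {n : Type*} [Fintype n] (x : n → ℂ) : ℝ :=
  ∑ j, ‖x j‖ ^ 2

/-- The operator (spectral) norm of `A` is at most `1`. -/
def OpNormLeOne {n : Type*} [Fintype n] (A : Matrix n n ℂ) : Prop :=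
  ∀ x : n → ℂ, enormSq (A.mulVec x) ≤ enormSq x

/-- `(φ t)_{t ≥ 0}` is a (continuous) semigroup of holomorphic self-maps of `U`. -/
def IsHolSemigroupOn {E : Type*} [NormedAddCommGroup E] [NormedSpace ℂ E]
    (U : Set E) (φ : ℝ → E → E) : Prop :=
  (∀ t : ℝ, 0 ≤ t → MapsTo (φ t) U U) ∧
  (∀ t : ℝ, 0 ≤ t → DifferentiableOn ℂ (φ t) U) ∧
  (∀ z ∈ U, φ 0 z = z) ∧
  (∀ s : ℝ, 0 ≤ s → ∀ t : ℝ, 0 ≤ t → ∀ z ∈ U, φ (s + t) z = φ s (φ t z)) ∧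
  (∀ K : Set E, K ⊆ U → IsCompact K →
    TendstoUniformlyOn (fun t => φ t) id (nhdsWithin 0 (Ioi 0)) K)

/-- `ℂ^N = ℂ × ℂ^p × ℂ^q × ℂ^r`. -/
abbrev E4 (p q r : ℕ) : Type := ℂ × (Fin p → ℂ) × (Fin q → ℂ) × (Fin r → ℂ)

/-- The Siegel half-plane `ℍ^N = {(z,u,v,w) : Im z > |u|² + |v|² + |w|²}`. -/
def Siegel4 (p q r : ℕ) : Set (E4 p q r) :=
  {x | enormSq x.2.1 + enormSq x.2.2.1 + enormSq x.2.2.2 < x.1.im}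

/-- `A_t = exp (t M)`. -/
def At {r : ℕ} (M : Matrix (Fin r) (Fin r) ℂ) (t : ℝ) : Matrix (Fin r) (Fin r) ℂ :=
  NormedSpace.exp ((t : ℂ) • M)

/-- `Q_t = I - A_tᴴ A_t`. -/
def Qt {r : ℕ} (M : Matrix (Fin r) (Fin r) ℂ) (t : ℝ) : Matrix (Fin r) (Fin r) ℂ :=
  (1 : Matrix (Fin r) (Fin r) ℂ) - (At M t)ᴴ * At M t

/-- `a_t = (λ I - √λ Aᴴ)⁻¹ (λ^t I - √(λ^t) A_tᴴ) a`. -/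
def at' {r : ℕ} (lam : ℝ) (A : Matrix (Fin r) (Fin r) ℂ)
    (M : Matrix (Fin r) (Fin r) ℂ) (a : Fin r → ℂ) (t : ℝ) : Fin r → ℂ :=
  ((((lam : ℂ) • (1 : Matrix (Fin r) (Fin r) ℂ) - (Real.sqrt lam : ℂ) • Aᴴ)⁻¹) *
    (((lam ^ t : ℝ) : ℂ) • (1 : Matrix (Fin r) (Fin r) ℂ)
      - ((Real.sqrt (lam ^ t) : ℝ) : ℂ) • (At M t)ᴴ)).mulVec a

/-- `b_t = ((1 - λ^t)/(1 - λ)) b`. -/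
def bt (lam : ℝ) (b : ℂ) (t : ℝ) : ℂ :=
  ((1 - ((lam ^ t : ℝ) : ℂ)) / (1 - (lam : ℂ))) * b

/-! ### Auxiliary lemmas on `herm` and `enormSq` -/

section hermLemmas
variable {n : Type*} [Fintype n]

lemma herm_smul_left (c : ℂ) (x y : n → ℂ) : herm (c • x) y = c * herm x y := by
  simp [herm, Finset.mul_sum, mul_assoc]

lemma herm_smul_right (c : ℝ) (x y : n → ℂ) : herm x ((c:ℂ) • y) = c * herm x y := by
  simp [herm, Finset.mul_sum]; ring_nf
  exact Finset.sum_congr rfl fun j _ => by ring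

lemma herm_add_right (x y z : n → ℂ) : herm x (y + z) = herm x y + herm x z := by
  simp [herm, map_add, mul_add, Finset.sum_add_distrib]

lemma herm_add_left (x y z : n → ℂ) : herm (x + y) z = herm x z + herm y z := by
  simp [herm, add_mul, Finset.sum_add_distrib]

lemma herm_zero_right (x : n → ℂ) : herm x 0 = 0 := by simp [herm]

lemma herm_conj (x y : n → ℂ) : herm x y = (starRingEnd ℂ) (herm y x) := by
  simp [herm, map_sum, _root_.map_mul]; exact Finset.sum_congr rfl fun j _ => by ring

lemma herm_self (x : n → ℂ) : herm x x = (enormSq x : ℂ) := by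
  simp only [herm, enormSq, Complex.mul_conj]
  push_cast
  exact Finset.sum_congr rfl fun j _ => by
    rw [Complex.normSq_eq_norm_sq]; norm_cast

lemma herm_mulVec_left [DecidableEq n] (B : Matrix n n ℂ) (x y : n → ℂ) :
    herm (B.mulVec x) y = herm x (Bᴴ.mulVec y) := by
  simp only [herm, Matrix.mulVec, dotProduct, conjTranspose_apply, map_sum, _root_.map_mul,
    RingHomCompTriple.comp_apply, RingHom.id_apply, starRingEnd_self_apply, Finset.sum_mul,
    Finset.mul_sum]
  rw [Finset.sum_comm]
  refine Finset.sum_congr rfl fun i _ => Finset.sum_congr rfl fun j _ => ?_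
  simp only [RCLike.star_def, RingHomCompTriple.comp_apply, RingHom.id_apply, _root_.map_mul,
    starRingEnd_self_apply]
  ring

lemma herm_sub_left (x y z : n → ℂ) : herm (x - y) z = herm x z - herm y z := by
  simp [herm, sub_mul, Finset.sum_sub_distrib]

lemma enormSq_nonneg (x : n → ℂ) : 0 ≤ enormSq x :=
  Finset.sum_nonneg fun j _ => by positivity

lemma enormSq_pos {x : n → ℂ} (hx : x ≠ 0) : 0 < enormSq x := by
  rcases Function.ne_iff.mp hx with ⟨j, hj⟩
  have hxj : x j ≠ 0 := by simpa using hj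
  have : (0:ℝ) < ‖x j‖ ^ 2 := pow_pos (norm_pos_iff.mpr hxj) 2
  exact Finset.sum_pos' (fun i _ => by positivity) ⟨j, Finset.mem_univ j, this⟩

lemma enormSq_smul (c : ℂ) (x : n → ℂ) : enormSq (c • x) = ‖c‖^2 * enormSq x := by
  simp [enormSq, mul_pow, Finset.mul_sum]

lemma dot_eq_herm (u z : n → ℂ) : dotProduct (star z) u = herm u z := by
  simp [dotProduct, herm, Complex.star_def]
  exact Finset.sum_congr rfl fun j _ => by ring

end hermLemmas

/-! ### The key quadratic inequality -/

lemma S13.quad_ineq {m : ℕ} (Q : Matrix (Fin m) (Fin m) ℂ) (hpsd : Q.PosSemidef)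
    (aa x : Fin m → ℂ) (hx : Q.mulVec x = aa) (c : ℝ) (w : Fin m → ℂ) :
    0 ≤ (herm (Q.mulVec w) w).re + 2*c*((herm w aa).re) + c^2*(herm aa x).re := by
  have h0 : 0 ≤ (herm (Q.mulVec (w + (c:ℂ) • x)) (w + (c:ℂ) • x)).re := by
    have := hpsd.dotProduct_mulVec_nonneg (w + (c:ℂ) • x)
    rw [dot_eq_herm] at this
    exact (Complex.le_def.mp this).1
  have hherm : Qᴴ = Q := hpsd.1
  have expand : herm (Q.mulVec (w + (c:ℂ) • x)) (w + (c:ℂ) • x)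
      = herm (Q.mulVec w) w + (c:ℂ) * herm aa w + (c:ℂ) * herm (Q.mulVec w) x
        + (c:ℂ)^2 * herm aa x := by
    rw [Matrix.mulVec_add, Matrix.mulVec_smul, hx]
    rw [herm_add_left, herm_add_right, herm_add_right]
    rw [herm_smul_left, herm_smul_right, herm_smul_right, herm_smul_left]
    ring
  have hqwx : (herm (Q.mulVec w) x).re = (herm aa w).re := by
    have h1 : herm (Q.mulVec w) x = (starRingEnd ℂ) (herm x (Q.mulVec w)) := herm_conj _ _
    have h2 : herm x (Q.mulVec w) = herm aa w := by
      calc herm x (Q.mulVec w) = herm x ((Qᴴ)ᴴ.mulVec w) := by rw [conjTranspose_conjTranspose]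
        _ = herm (Qᴴ.mulVec x) w := (herm_mulVec_left _ _ _).symm
        _ = herm (Q.mulVec x) w := by rw [hherm]
        _ = herm aa w := by rw [hx]
    rw [h1, h2, Complex.conj_re]
  have hwa : (herm w aa).re = (herm aa w).re := by rw [herm_conj w aa, Complex.conj_re]
  rw [expand] at h0
  have hc2 : ((c:ℂ)^2) = ((c^2 : ℝ) : ℂ) := by push_cast; ring
  rw [hc2] at h0
  simp only [Complex.add_re, Complex.re_ofReal_mul] at h0
  rw [hqwx] at h0
  rw [hwa]
  linarith

lemma S13.herm_Qt_re {m : ℕ} (B : Matrix (Fin m) (Fin m) ℂ) (w : Fin m → ℂ) :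
    (herm (((1 : Matrix (Fin m) (Fin m) ℂ) - Bᴴ * B).mulVec w) w).re
      = enormSq w - enormSq (B.mulVec w) := by
  rw [Matrix.sub_mulVec, Matrix.one_mulVec, ← Matrix.mulVec_mulVec, herm_sub_left]
  have h1 : herm (Bᴴ.mulVec (B.mulVec w)) w = herm (B.mulVec w) (B.mulVec w) := by
    rw [herm_mulVec_left, conjTranspose_conjTranspose]
  rw [h1, herm_self, herm_self]
  simp

/-! ### Invertibility of `λ I - √λ Aᴴ` -/

lemma S13.S_isUnit {r : ℕ} (lam : ℝ) (hlam : 1 < lam) (A : Matrix (Fin r) (Fin r) ℂ)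
    (hAnorm : OpNormLeOne A) :
    IsUnit ((lam:ℂ) • (1 : Matrix (Fin r) (Fin r) ℂ) - (Real.sqrt lam : ℂ) • Aᴴ) := by
  have hlam0 : (0:ℝ) < lam := by linarith
  have hsq : Real.sqrt lam * Real.sqrt lam = lam := Real.mul_self_sqrt hlam0.le
  have hsq0 : (0:ℝ) < Real.sqrt lam := Real.sqrt_pos.mpr hlam0
  have h1 : IsUnit ((lam:ℂ) • (1 : Matrix (Fin r) (Fin r) ℂ) - (Real.sqrt lam : ℂ) • A) := by
    rw [Matrix.isUnit_iff_isUnit_det]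
    rw [isUnit_iff_ne_zero]
    intro hdet
    obtain ⟨v, hv0, hv⟩ := (Matrix.exists_mulVec_eq_zero_iff).mpr hdet
    rw [Matrix.sub_mulVec, Matrix.smul_mulVec, Matrix.smul_mulVec,
      Matrix.one_mulVec, sub_eq_zero] at hv
    have hAv : A.mulVec v = (Real.sqrt lam : ℂ) • v := by
      have h2 : ((Real.sqrt lam : ℂ))⁻¹ • ((lam:ℂ) • v) = A.mulVec v := by
        rw [hv, inv_smul_smul₀ (by exact_mod_cast hsq0.ne')]
      rw [← h2, smul_smul]
      congr 1
      rw [inv_mul_eq_iff_eq_mul₀ (by exact_mod_cast hsq0.ne' : ((Real.sqrt lam : ℝ):ℂ) ≠ 0)]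
      exact_mod_cast hsq.symm
    have hnorm := hAnorm v
    rw [hAv, enormSq_smul] at hnorm
    have hc : ‖((Real.sqrt lam : ℝ):ℂ)‖^2 = lam := by
      rw [Complex.norm_real, Real.norm_eq_abs, abs_of_pos hsq0, Real.sq_sqrt hlam0.le]
    rw [hc] at hnorm
    have hvpos := enormSq_pos hv0
    nlinarith
  have hconj : ((lam:ℂ) • (1 : Matrix (Fin r) (Fin r) ℂ) - (Real.sqrt lam : ℂ) • A)ᴴ
      = (lam:ℂ) • (1 : Matrix (Fin r) (Fin r) ℂ) - (Real.sqrt lam : ℂ) • Aᴴ := by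
    rw [conjTranspose_sub, Matrix.conjTranspose_smul, Matrix.conjTranspose_smul,
      conjTranspose_one]
    simp [Complex.star_def, Complex.conj_ofReal]
  rw [← hconj, Matrix.isUnit_iff_isUnit_det, Matrix.det_conjTranspose]
  exact ((Matrix.isUnit_iff_isUnit_det _).mp h1).star

/-! ### Properties of `At`, `at'`, `bt` -/

section AtLemmas
variable {r : ℕ} (M : Matrix (Fin r) (Fin r) ℂ)

lemma S13.smul_commute (X : Matrix (Fin r) (Fin r) ℂ) (c d : ℂ) : Commute (c • X) (d • X) := by
  unfold Commute SemiconjBy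
  rw [smul_mul_assoc, mul_smul_comm, smul_mul_assoc, mul_smul_comm, smul_comm]

lemma S13.exp_smul_commute (X : Matrix (Fin r) (Fin r) ℂ) (c d : ℂ) :
    Commute (NormedSpace.exp (c • X)) (NormedSpace.exp (d • X)) := by
  unfold Commute SemiconjBy
  rw [← Matrix.exp_add_of_commute _ _ (S13.smul_commute X c d),
      ← Matrix.exp_add_of_commute _ _ (S13.smul_commute X d c), add_comm]

lemma S13.At_zero : At M 0 = 1 := by
  simp [At, NormedSpace.exp_zero]

lemma S13.At_one : At M 1 = NormedSpace.exp M := by simp [At]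

lemma S13.At_add (s t : ℝ) : At M (s + t) = At M s * At M t := by
  unfold At
  rw [← Matrix.exp_add_of_commute _ _ (S13.smul_commute M (s:ℂ) (t:ℂ))]
  congr 1
  push_cast
  rw [add_smul]

lemma S13.At_herm (t : ℝ) : (At M t)ᴴ = NormedSpace.exp ((t : ℂ) • Mᴴ) := by
  rw [At, ← Matrix.exp_conjTranspose _]
  congr 1
  rw [Matrix.conjTranspose_smul]
  simp [Complex.star_def, Complex.conj_ofReal]

lemma S13.At_herm_commute_Aherm {A : Matrix (Fin r) (Fin r) ℂ} (hM : NormedSpace.exp M = A)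
    (t : ℝ) : Commute ((At M t)ᴴ) Aᴴ := by
  rw [S13.At_herm, ← hM, ← Matrix.exp_conjTranspose _]
  have h := S13.exp_smul_commute Mᴴ (t:ℂ) 1
  rwa [one_smul] at h

variable (lam : ℝ) (A : Matrix (Fin r) (Fin r) ℂ)

lemma S13.rpow_mul_self (hlam : 1 < lam) (s t : ℝ) : lam ^ (s+t) = lam ^ s * lam ^ t :=
  Real.rpow_add (by linarith) s t

lemma S13.sqrt_rpow_mul (hlam : 1 < lam) (s t : ℝ) :
    Real.sqrt (lam ^ (s+t)) = Real.sqrt (lam ^ s) * Real.sqrt (lam ^ t) := by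
  rw [S13.rpow_mul_self lam hlam, Real.sqrt_mul (Real.rpow_nonneg (by linarith) s)]

lemma S13.S_comm_At (hM : NormedSpace.exp M = A) (t : ℝ) :
    ((lam:ℂ) • (1 : Matrix (Fin r) (Fin r) ℂ) - (Real.sqrt lam : ℂ) • Aᴴ) * (At M t)ᴴ
      = (At M t)ᴴ * ((lam:ℂ) • (1 : Matrix (Fin r) (Fin r) ℂ) - (Real.sqrt lam : ℂ) • Aᴴ) := by
  rw [Matrix.sub_mul, Matrix.mul_sub, Matrix.smul_mul, Matrix.smul_mul, Matrix.mul_smul,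
    Matrix.mul_smul, Matrix.one_mul, Matrix.mul_one, (S13.At_herm_commute_Aherm M hM t).eq]

lemma S13.Sinv_comm_At (hM : NormedSpace.exp M = A)
    (hS : IsUnit ((lam:ℂ) • (1 : Matrix (Fin r) (Fin r) ℂ) - (Real.sqrt lam : ℂ) • Aᴴ))
    (t : ℝ) :
    ((lam:ℂ) • (1 : Matrix (Fin r) (Fin r) ℂ) - (Real.sqrt lam : ℂ) • Aᴴ)⁻¹ * (At M t)ᴴ
      = (At M t)ᴴ * ((lam:ℂ) • (1 : Matrix (Fin r) (Fin r) ℂ) - (Real.sqrt lam : ℂ) • Aᴴ)⁻¹ := by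
  have hu := hS.unit_spec
  have hc : Commute (↑hS.unit : Matrix (Fin r) (Fin r) ℂ) ((At M t)ᴴ) := by
    unfold Commute SemiconjBy
    rw [hu]
    exact S13.S_comm_At M lam A hM t
  have := (hc.units_inv_left).eq
  rwa [Matrix.coe_units_inv, hu] at this

lemma S13.at'_add (hlam : 1 < lam) (hM : NormedSpace.exp M = A)
    (hS : IsUnit ((lam:ℂ) • (1 : Matrix (Fin r) (Fin r) ℂ) - (Real.sqrt lam : ℂ) • Aᴴ))
    (a : Fin r → ℂ) (s t : ℝ) :
    at' lam A M a (s+t) = (((lam ^ s : ℝ)):ℂ) • at' lam A M a t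
      + (((Real.sqrt (lam ^ t) : ℝ)):ℂ) • (At M t)ᴴ.mulVec (at' lam A M a s) := by
  set S := (lam:ℂ) • (1 : Matrix (Fin r) (Fin r) ℂ) - (Real.sqrt lam : ℂ) • Aᴴ with hSdef
  set R : ℝ → Matrix (Fin r) (Fin r) ℂ := fun u =>
    (((lam ^ u : ℝ)):ℂ) • (1 : Matrix (Fin r) (Fin r) ℂ)
      - (((Real.sqrt (lam ^ u) : ℝ)):ℂ) • (At M u)ᴴ with hRdef
  have key : R (s+t) = (((lam ^ s : ℝ)):ℂ) • R t
      + (((Real.sqrt (lam ^ t) : ℝ)):ℂ) • ((At M t)ᴴ * R s) := by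
    rw [hRdef]
    simp only
    rw [S13.At_add, conjTranspose_mul, S13.rpow_mul_self lam hlam,
      Real.sqrt_mul (Real.rpow_nonneg (by linarith : (0:ℝ) ≤ lam) s)]
    rw [Matrix.mul_sub, Matrix.mul_smul, Matrix.mul_smul, Matrix.mul_one]
    push_cast
    module
  unfold at'
  rw [← hSdef]
  show (S⁻¹ * R (s+t)).mulVec a = _
  rw [key, Matrix.mul_add, Matrix.mul_smul, Matrix.mul_smul, ← Matrix.mul_assoc,
    S13.Sinv_comm_At M lam A hM hS, Matrix.mul_assoc, Matrix.add_mulVec,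
    Matrix.smul_mulVec, Matrix.smul_mulVec, Matrix.mulVec_mulVec, ← hSdef]

lemma S13.at'_one (hM : NormedSpace.exp M = A)
    (hS : IsUnit ((lam:ℂ) • (1 : Matrix (Fin r) (Fin r) ℂ) - (Real.sqrt lam : ℂ) • Aᴴ))
    (a : Fin r → ℂ) : at' lam A M a 1 = a := by
  unfold at'
  rw [Real.rpow_one, S13.At_one, hM,
    Matrix.nonsing_inv_mul _ ((Matrix.isUnit_iff_isUnit_det _).mp hS), Matrix.one_mulVec]

lemma S13.at'_zero (a : Fin r → ℂ) : at' lam A M a 0 = 0 := by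
  unfold at'
  rw [Real.rpow_zero, S13.At_zero, conjTranspose_one, Real.sqrt_one]
  simp

lemma S13.bt_add (hlam : 1 < lam) (b : ℂ) (s t : ℝ) :
    bt lam b (s+t) = (((lam ^ s : ℝ)):ℂ) * bt lam b t + bt lam b s := by
  unfold bt
  have hne : (1:ℂ) - (lam:ℂ) ≠ 0 := by
    intro h
    have h1 : (lam:ℂ) = 1 := by linear_combination -h
    have h2 : lam = 1 := by exact_mod_cast h1
    linarith
  rw [S13.rpow_mul_self lam hlam]
  field_simp
  push_cast
  ring

lemma S13.bt_one (hlam : 1 < lam) (b : ℂ) : bt lam b 1 = b := by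
  unfold bt
  have hne : (1:ℂ) - (lam:ℂ) ≠ 0 := by
    intro h
    have h1 : (lam:ℂ) = 1 := by linear_combination -h
    have h2 : lam = 1 := by exact_mod_cast h1
    linarith
  rw [Real.rpow_one, div_self hne, one_mul]

lemma S13.bt_zero (b : ℂ) : bt lam b 0 = 0 := by
  unfold bt
  rw [Real.rpow_zero]
  simp

lemma S13.At_continuous : Continuous fun t : ℝ => At M t := by
  letI : SeminormedRing (Matrix (Fin r) (Fin r) ℂ) := Matrix.linftyOpSemiNormedRing
  letI : NormedRing (Matrix (Fin r) (Fin r) ℂ) := Matrix.linftyOpNormedRing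
  letI : NormedAlgebra ℂ (Matrix (Fin r) (Fin r) ℂ) := Matrix.linftyOpNormedAlgebra
  letI : NormedAlgebra ℚ (Matrix (Fin r) (Fin r) ℂ) := Matrix.linftyOpNormedAlgebra
  exact NormedSpace.exp_continuous.comp (Complex.continuous_ofReal.smul continuous_const)

lemma S13.At_entry_continuous (i j : Fin r) : Continuous fun t : ℝ => At M t i j :=
  (continuous_apply j).comp ((continuous_apply i).comp (S13.At_continuous M))

lemma S13.rpow_continuous (hlam : 1 < lam) : Continuous fun t : ℝ => lam ^ t :=
  Continuous.rpow continuous_const continuous_id fun _ => Or.inl (by positivity)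

lemma S13.at'_entry_continuous (hlam : 1 < lam) (a : Fin r → ℂ) (j : Fin r) :
    Continuous fun t : ℝ => at' lam A M a t j := by
  have hrpow := S13.rpow_continuous lam hlam
  have hB : ∀ (l k : Fin r), Continuous fun t : ℝ =>
      ((((lam ^ t : ℝ)):ℂ) • (1 : Matrix (Fin r) (Fin r) ℂ)
        - (((Real.sqrt (lam ^ t) : ℝ)):ℂ) • (At M t)ᴴ) l k := by
    intro l k
    simp only [Matrix.sub_apply, Matrix.smul_apply, smul_eq_mul, conjTranspose_apply]
    exact ((Complex.continuous_ofReal.comp hrpow).mul continuous_const).sub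
      ((Complex.continuous_ofReal.comp (Real.continuous_sqrt.comp hrpow)).mul
        (continuous_star.comp (S13.At_entry_continuous M k l)))
  have heq : (fun t : ℝ => at' lam A M a t j)
      = fun t : ℝ => ∑ k, (∑ l, (((lam:ℂ) • (1 : Matrix (Fin r) (Fin r) ℂ)
          - (Real.sqrt lam : ℂ) • Aᴴ)⁻¹) j l *
        ((((lam ^ t : ℝ)):ℂ) • (1 : Matrix (Fin r) (Fin r) ℂ)
          - (((Real.sqrt (lam ^ t) : ℝ)):ℂ) • (At M t)ᴴ) l k) * a k := by
    funext t
    simp [at', Matrix.mulVec, Matrix.mul_apply, dotProduct]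
  rw [heq]
  exact continuous_finset_sum _ fun k _ =>
    (continuous_finset_sum _ fun l _ => (continuous_const.mul (hB l k))).mul continuous_const

end AtLemmas

/-- Let `ψ(z,u,v,w) = (λz + 2i⟨w,a⟩ + b, √λ u, √λ Dv, √λ Aw)` be a hyperbolic
self-map of `ℍ^N` (`λ > 1`, `D` diagonal unimodular without the entry `1`, `A`
non-singular, `‖A‖ ≤ 1`), and suppose `exp M = A`. If for every `t ≥ 0` the
matrix `Q_t` is Hermitian positive semi-definite and there is `x_t` with
`Q_t x_t = a_t` and `Im b_t ≥ (1/λ^t) x_tᴴ a_t`, then `ψ` embeds into a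
semigroup of holomorphic self-maps of `ℍ^N`. -/
theorem stmt13 {p q r : ℕ} (lam : ℝ) (hlam : 1 < lam)
    (a : Fin r → ℂ) (b : ℂ)
    (e : Fin q → ℂ) (he : ∀ j, ‖e j‖ = 1) (he1 : ∀ j, e j ≠ 1)
    (A : Matrix (Fin r) (Fin r) ℂ) (hAunit : IsUnit A) (hAnorm : OpNormLeOne A)
    (ψ : E4 p q r → E4 p q r)
    (hψ : ∀ x, ψ x = ((lam : ℂ) * x.1 + 2 * Complex.I * herm x.2.2.2 a + b,
      (Real.sqrt lam : ℂ) • x.2.1,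
      (Real.sqrt lam : ℂ) • (Matrix.diagonal e).mulVec x.2.2.1,
      (Real.sqrt lam : ℂ) • A.mulVec x.2.2.2))
    (hself : MapsTo ψ (Siegel4 p q r) (Siegel4 p q r))
    (M : Matrix (Fin r) (Fin r) ℂ) (hM : NormedSpace.exp M = A)
    (hcond : ∀ t : ℝ, 0 ≤ t →
      (Qt M t).PosSemidef ∧
      ∃ x : Fin r → ℂ, (Qt M t).mulVec x = at' lam A M a t ∧
        (bt lam b t).im ≥ (1 / (lam ^ t : ℝ)) * (herm (at' lam A M a t) x).re) :
    ∃ φt : ℝ → E4 p q r → E4 p q r,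
      IsHolSemigroupOn (Siegel4 p q r) φt ∧ ∀ z ∈ Siegel4 p q r, φt 1 z = ψ z := by
  have hlam0 : (0:ℝ) < lam := by linarith
  have hlt : ∀ t : ℝ, 0 < lam ^ t := fun t => Real.rpow_pos_of_pos hlam0 t
  have hS := S13.S_isUnit lam hlam A hAnorm
  set D : ℝ → Matrix (Fin q) (Fin q) ℂ := fun t =>
    Matrix.diagonal (fun j => Complex.exp ((t:ℂ) * Complex.log (e j))) with hD
  set φ : ℝ → E4 p q r → E4 p q r := fun t x =>
    ((((lam ^ t : ℝ)):ℂ) * x.1 + 2 * Complex.I * herm x.2.2.2 (at' lam A M a t) + bt lam b t,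
     (((Real.sqrt (lam ^ t) : ℝ)):ℂ) • x.2.1,
     (((Real.sqrt (lam ^ t) : ℝ)):ℂ) • (D t).mulVec x.2.2.1,
     (((Real.sqrt (lam ^ t) : ℝ)):ℂ) • (At M t).mulVec x.2.2.2) with hφ
  have hφ0 : ∀ x, φ 0 x = x := by
    intro x
    rw [hφ]
    simp only
    rw [S13.at'_zero, S13.bt_zero, S13.At_zero, herm_zero_right, Real.rpow_zero,
      Real.sqrt_one, hD]
    simp only [Complex.ofReal_zero, zero_mul, Complex.exp_zero, Complex.ofReal_one, one_mul,
      mul_zero, add_zero, one_smul, Matrix.diagonal_one, Matrix.one_mulVec]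
  have hnorm_sqrt : ∀ t : ℝ, ‖(((Real.sqrt (lam ^ t) : ℝ)):ℂ)‖^2 = lam ^ t := by
    intro t
    rw [Complex.norm_real, Real.norm_eq_abs, _root_.abs_of_nonneg (Real.sqrt_nonneg _),
      Real.sq_sqrt (hlt t).le]
  have hDnorm : ∀ (t : ℝ) (v : Fin q → ℂ), enormSq ((D t).mulVec v) = enormSq v := by
    intro t v
    unfold enormSq
    refine Finset.sum_congr rfl fun j _ => ?_
    rw [hD]
    simp only [Matrix.mulVec_diagonal]
    rw [norm_mul]
    have h1 : ‖Complex.exp ((t:ℂ) * Complex.log (e j))‖ = 1 := by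
      rw [Complex.norm_exp]
      have h2 : ((t:ℂ) * Complex.log (e j)).re = t * Real.log ‖e j‖ := by
        rw [Complex.mul_re, Complex.log_re]
        simp
      rw [h2, he j, Real.log_one, mul_zero, Real.exp_zero]
    rw [h1, one_mul]
  have him : ∀ (t : ℝ) (z : ℂ) (h c : ℂ),
      ((((lam ^ t : ℝ)):ℂ) * z + 2 * Complex.I * h + c).im
        = (lam ^ t) * z.im + 2 * h.re + c.im := by
    intro t z h c
    simp [Complex.add_im, Complex.mul_im, Complex.mul_re]
  have hmapsTo : ∀ t : ℝ, 0 ≤ t → MapsTo (φ t) (Siegel4 p q r) (Siegel4 p q r) := by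
    intro t ht x hx
    obtain ⟨hpsd, xt, hxt, hb⟩ := hcond t ht
    have hx' : enormSq x.2.1 + enormSq x.2.2.1 + enormSq x.2.2.2 < x.1.im := hx
    show enormSq (φ t x).2.1 + enormSq (φ t x).2.2.1 + enormSq (φ t x).2.2.2 < (φ t x).1.im
    rw [hφ]
    simp only
    rw [enormSq_smul, enormSq_smul, enormSq_smul, hnorm_sqrt, hDnorm, him]
    set L := lam ^ t with hL
    have hLpos : 0 < L := hlt t
    have hquad := S13.quad_ineq (Qt M t) hpsd (at' lam A M a t) xt hxt (1/L) x.2.2.2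
    rw [Qt] at hquad
    rw [S13.herm_Qt_re] at hquad
    have hscaled : 0 ≤ L * (enormSq x.2.2.2 - enormSq ((At M t).mulVec x.2.2.2))
        + 2 * (herm x.2.2.2 (at' lam A M a t)).re
        + (1/L) * (herm (at' lam A M a t) xt).re := by
      have h2 := mul_nonneg hLpos.le hquad
      have h3 : L * ((enormSq x.2.2.2 - enormSq ((At M t).mulVec x.2.2.2))
          + 2*(1/L)*((herm x.2.2.2 (at' lam A M a t)).re)
          + (1/L)^2*(herm (at' lam A M a t) xt).re)
          = L * (enormSq x.2.2.2 - enormSq ((At M t).mulVec x.2.2.2))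
          + 2 * (herm x.2.2.2 (at' lam A M a t)).re
          + (1/L) * (herm (at' lam A M a t) xt).re := by
        field_simp
      rw [h3] at h2
      exact h2
    have hbt : (bt lam b t).im ≥ (1/L) * (herm (at' lam A M a t) xt).re := hb
    have hxim : L * (enormSq x.2.1 + enormSq x.2.2.1 + enormSq x.2.2.2) < L * x.1.im :=
      mul_lt_mul_of_pos_left hx' hLpos
    nlinarith [enormSq_nonneg x.2.1, enormSq_nonneg x.2.2.1]
  refine ⟨φ, ⟨hmapsTo, ?_, fun z _ => hφ0 z, ?_, ?_⟩, ?_⟩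
  · -- differentiability
    intro t ht
    apply Differentiable.differentiableOn
    have h1 : Differentiable ℂ (fun x : E4 p q r => x.1) := differentiable_fst
    have h2 : Differentiable ℂ (fun x : E4 p q r => x.2.1) :=
      differentiable_fst.comp differentiable_snd
    have h3 : Differentiable ℂ (fun x : E4 p q r => x.2.2.1) :=
      differentiable_fst.comp (differentiable_snd.comp differentiable_snd)
    have h4 : Differentiable ℂ (fun x : E4 p q r => x.2.2.2) :=
      differentiable_snd.comp (differentiable_snd.comp differentiable_snd)
    have h4j : ∀ j, Differentiable ℂ (fun x : E4 p q r => x.2.2.2 j) := fun j =>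
      (differentiable_pi.mp h4) j
    have h3j : ∀ j, Differentiable ℂ (fun x : E4 p q r => x.2.2.1 j) := fun j =>
      (differentiable_pi.mp h3) j
    have hherm : Differentiable ℂ (fun x : E4 p q r => herm x.2.2.2 (at' lam A M a t)) := by
      unfold herm
      exact Differentiable.fun_sum fun j _ => (h4j j).mul_const _
    refine Differentiable.prodMk ?_ (Differentiable.prodMk ?_ (Differentiable.prodMk ?_ ?_))
    · exact ((h1.const_mul _).add (hherm.const_mul _)).add_const _
    · exact h2.fun_const_smul _
    · refine Differentiable.fun_const_smul ?_ _
      refine differentiable_pi.mpr fun i => ?_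
      show Differentiable ℂ (fun x : E4 p q r => ∑ j, D t i j * x.2.2.1 j)
      exact Differentiable.fun_sum fun j _ => (h3j j).const_mul _
    · refine Differentiable.fun_const_smul ?_ _
      refine differentiable_pi.mpr fun i => ?_
      show Differentiable ℂ (fun x : E4 p q r => ∑ j, At M t i j * x.2.2.2 j)
      exact Differentiable.fun_sum fun j _ => (h4j j).const_mul _
  · -- semigroup property
    intro s hs t ht x hx
    have hDadd : D (s+t) = D s * D t := by
      rw [hD]
      simp only
      rw [Matrix.diagonal_mul_diagonal]
      refine congrArg Matrix.diagonal ?_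
      funext j
      have hst : ((s+t:ℝ):ℂ) * Complex.log (e j)
          = (s:ℂ) * Complex.log (e j) + (t:ℂ) * Complex.log (e j) := by push_cast; ring
      rw [hst, Complex.exp_add]
    simp only [hφ, Prod.mk.injEq]
    refine ⟨?_, ?_, ?_, ?_⟩
    · rw [S13.at'_add M lam A hlam hM hS a s t, herm_add_right, herm_smul_right,
        herm_smul_right, herm_smul_left, herm_mulVec_left, S13.bt_add lam hlam b s t,
        S13.rpow_mul_self lam hlam]
      push_cast
      ring
    · rw [S13.sqrt_rpow_mul lam hlam, Complex.ofReal_mul, mul_smul]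
    · rw [hDadd, ← Matrix.mulVec_mulVec, S13.sqrt_rpow_mul lam hlam, Complex.ofReal_mul,
        mul_smul, Matrix.mulVec_smul]
    · rw [S13.At_add, ← Matrix.mulVec_mulVec, S13.sqrt_rpow_mul lam hlam, Complex.ofReal_mul,
        mul_smul, Matrix.mulVec_smul]
  · -- uniform convergence
    intro K hKU hKc
    have hrpow : Continuous fun t : ℝ => lam ^ t := S13.rpow_continuous lam hlam
    have hsqrtC : Continuous fun t : ℝ => ((Real.sqrt (lam ^ t) : ℝ) : ℂ) :=
      Complex.continuous_ofReal.comp (Real.continuous_sqrt.comp hrpow)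
    have hz : Continuous fun pr : ℝ × E4 p q r => pr.2.1 :=
      continuous_fst.comp continuous_snd
    have hu : Continuous fun pr : ℝ × E4 p q r => pr.2.2.1 :=
      continuous_fst.comp (continuous_snd.comp continuous_snd)
    have hv : Continuous fun pr : ℝ × E4 p q r => pr.2.2.2.1 :=
      continuous_fst.comp (continuous_snd.comp (continuous_snd.comp continuous_snd))
    have hw : Continuous fun pr : ℝ × E4 p q r => pr.2.2.2.2 :=
      continuous_snd.comp (continuous_snd.comp (continuous_snd.comp continuous_snd))
    have hat'j : ∀ j, Continuous fun t : ℝ => at' lam A M a t j :=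
      S13.at'_entry_continuous M lam A hlam a
    have hbtC : Continuous fun t : ℝ => bt lam b t := by
      unfold bt
      exact (Continuous.div_const
        (continuous_const.sub (Complex.continuous_ofReal.comp hrpow)) _).mul continuous_const
    have hhermC : Continuous fun pr : ℝ × E4 p q r => herm pr.2.2.2.2 (at' lam A M a pr.1) := by
      unfold herm
      exact continuous_finset_sum _ fun j _ =>
        ((continuous_apply j).comp hw).mul
          (Complex.continuous_conj.comp ((hat'j j).comp continuous_fst))
    have hDv : Continuous fun pr : ℝ × E4 p q r => (D pr.1).mulVec pr.2.2.2.1 := by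
      refine continuous_pi fun i => ?_
      show Continuous fun pr : ℝ × E4 p q r => ∑ j, D pr.1 i j * pr.2.2.2.1 j
      refine continuous_finset_sum _ fun j _ =>
        Continuous.mul ?_ ((continuous_apply j).comp hv)
      have hDij : (fun pr : ℝ × E4 p q r => D pr.1 i j)
          = fun pr : ℝ × E4 p q r =>
            if i = j then Complex.exp ((pr.1:ℂ) * Complex.log (e i)) else 0 := by
        funext pr
        rw [hD]
        simp [Matrix.diagonal_apply]
      rw [hDij]
      by_cases hij : i = j
      · simp only [hij, if_true]
        exact Complex.continuous_exp.comp
          ((Complex.continuous_ofReal.comp continuous_fst).mul continuous_const)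
      · simp only [hij, if_false]
        exact continuous_const
    have hAw : Continuous fun pr : ℝ × E4 p q r => (At M pr.1).mulVec pr.2.2.2.2 := by
      refine continuous_pi fun i => ?_
      show Continuous fun pr : ℝ × E4 p q r => ∑ j, At M pr.1 i j * pr.2.2.2.2 j
      exact continuous_finset_sum _ fun j _ =>
        ((S13.At_entry_continuous M i j).comp continuous_fst).mul ((continuous_apply j).comp hw)
    have hcont : Continuous (fun pr : ℝ × E4 p q r => φ pr.1 pr.2) := by
      simp only [hφ]
      refine Continuous.prodMk ?_ (Continuous.prodMk ?_ (Continuous.prodMk ?_ ?_))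
      · exact (((Complex.continuous_ofReal.comp (hrpow.comp continuous_fst)).mul hz).add
          (continuous_const.mul hhermC)).add (hbtC.comp continuous_fst)
      · exact (hsqrtC.comp continuous_fst).smul hu
      · exact (hsqrtC.comp continuous_fst).smul hDv
      · exact (hsqrtC.comp continuous_fst).smul hAw
    have hUC : UniformContinuousOn (Function.uncurry φ) ((Icc (0:ℝ) 1) ×ˢ K) :=
      IsCompact.uniformContinuousOn_of_continuous (isCompact_Icc.prod hKc) hcont.continuousOn
    have h0 : (0:ℝ) ∈ Icc (0:ℝ) 1 := ⟨le_refl 0, zero_le_one⟩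
    have hTU : TendstoUniformlyOn φ (φ 0) (nhdsWithin 0 (Icc (0:ℝ) 1)) K :=
      hUC.tendstoUniformlyOn h0
    have hle : nhdsWithin (0:ℝ) (Ioi 0) ≤ nhdsWithin (0:ℝ) (Icc (0:ℝ) 1) := by
      rw [nhdsWithin_le_iff]
      exact mem_of_superset (Ioc_mem_nhdsGT zero_lt_one) Ioc_subset_Icc_self
    have hid : φ 0 = id := funext hφ0
    rw [hid] at hTU
    exact fun u hu => (hTU u hu).filter_mono hle
  · -- time 1
    intro z hz
    have hD1 : D 1 = Matrix.diagonal e := by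
      rw [hD]
      simp only
      refine congrArg Matrix.diagonal ?_
      funext j
      rw [Complex.ofReal_one, one_mul, Complex.exp_log]
      intro h0
      have := he j
      rw [h0] at this
      simp at this
    simp only [hφ, hψ]
    rw [Real.rpow_one, S13.bt_one lam hlam b, S13.at'_one M lam A hM hS a, S13.At_one, hM, hD1]
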